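/- Let V be a finite-dimensional complex vector space, b a nondegenerate symmetric bilinear form on V, and V* its dual space. Let ♭ : V → V* be the isomorphism x ↦ b(x, −), and define the dual bilinear form b' on V* by b'(α, β) := α(♭⁻¹β). Define the canonical bilinear form b_can on V ⊕ V* by b_can((x₁,α₁),(x₂,α₂)) := α₁(x₂) + α₂(x₁). Then b_can is a nondegenerate symmetric bilinear form, and b_can and the direct sum form b ⊕ b' (given by (b⊕b')((x₁,α₁),(x₂,α₂)) = b(x₁,x₂) + b'(α₁,α₂)) lie in the same path component of the space of nondegenerate symmetric bilinear forms on V ⊕ V*: there is a continuous path t ↦ b_t of nondegenerate symmetric bilinear forms on V ⊕ V* joining b_can to b ⊕ b'. -/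
import Mathlib


/-- On `V ⊕ V*` the canonical hyperbolic bilinear form `b_can` is a
nondegenerate symmetric bilinear form and is connected to `b ⊕ b'` by a
continuous path of nondegenerate symmetric bilinear forms. -/
theorem bcan_homotopic_to_b_oplus_bdual
    {V : Type*} [AddCommGroup V] [Module ℂ V] [FiniteDimensional ℂ V]
    (b : LinearMap.BilinForm ℂ V) (hsymm : ∀ x y, b x y = b y x)
    (hnd : ∀ x, (∀ y, b x y = 0) → x = 0)
    (flat : V ≃ₗ[ℂ] Module.Dual ℂ V) (hflat : ∀ x y, flat x y = b x y)
    (bcan bsum : LinearMap.BilinForm ℂ (V × Module.Dual ℂ V))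
    (hbcan : ∀ p q : V × Module.Dual ℂ V, bcan p q = p.2 q.1 + q.2 p.1)
    (hbsum : ∀ p q : V × Module.Dual ℂ V,
      bsum p q = b p.1 q.1 + p.2 (flat.symm q.2)) :
    ((∀ p q, bcan p q = bcan q p) ∧ (∀ p, (∀ q, bcan p q = 0) → p = 0)) ∧
    ∃ B : ℝ → LinearMap.BilinForm ℂ (V × Module.Dual ℂ V),
      (∀ p q, Continuous fun t => B t p q) ∧
      B 0 = bcan ∧ B 1 = bsum ∧
      ∀ t, (∀ p q, B t p q = B t q p) ∧ (∀ p, (∀ q, B t p q = 0) → p = 0) := by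
  -- the swap identity for the dual form
  have swap : ∀ α β : Module.Dual ℂ V, α (flat.symm β) = β (flat.symm α) := by
    intro α β
    have h1 := hflat (flat.symm β) (flat.symm α)
    have h2 := hflat (flat.symm α) (flat.symm β)
    rw [flat.apply_symm_apply] at h1 h2
    rw [h2, hsymm, ← h1]
  -- bcan is symmetric
  have bcan_symm : ∀ p q, bcan p q = bcan q p := by
    intro p q; rw [hbcan, hbcan]; ring
  -- bcan is nondegenerate
  have bcan_nd : ∀ p : V × Module.Dual ℂ V, (∀ q, bcan p q = 0) → p = 0 := by
    intro p hp
    have hx : p.1 = 0 := by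
      rw [← (Module.forall_dual_apply_eq_zero_iff ℂ p.1)]
      intro φ
      have := hp (0, φ)
      rw [hbcan] at this
      simpa using this
    have hα : p.2 = 0 := by
      ext y
      have := hp (y, 0)
      rw [hbcan] at this
      simpa using this
    exact Prod.ext hx hα
  -- bsum is symmetric
  have bsum_symm : ∀ p q, bsum p q = bsum q p := by
    intro p q; rw [hbsum, hbsum, hsymm, swap]
  -- the key identity : bsum p q = bcan (Φ p) q
  have key : ∀ p q, bsum p q = bcan (flat.symm p.2, flat p.1) q := by
    intro p q
    rw [hbsum, hbcan]
    simp only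
    rw [hflat, swap]
  refine ⟨⟨bcan_symm, bcan_nd⟩, ?_⟩
  set z : ℝ → ℂ := fun t => Complex.exp (Real.pi * Complex.I * t) with hz
  refine ⟨fun t => ((1 + z t) / 2) • bcan + ((1 - z t) / 2) • bsum, ?_, ?_, ?_, ?_⟩
  · intro p q
    simp only [LinearMap.add_apply, LinearMap.smul_apply, smul_eq_mul]
    fun_prop
  · have h0 : z 0 = 1 := by simp [hz]
    simp [h0]
  · have h1 : z 1 = -1 := by
      simp only [hz, Complex.ofReal_one, mul_one]
      exact Complex.exp_pi_mul_I
    have : ((1 : ℂ) + -1) / 2 = 0 := by norm_num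
    simp [h1, this]
  · intro t
    constructor
    · intro p q
      simp only [LinearMap.add_apply, LinearMap.smul_apply, smul_eq_mul]
      rw [bcan_symm p q, bsum_symm p q]
    · intro p hp
      have hzne : z t ≠ 0 := Complex.exp_ne_zero _
      set A : ℂ := (1 + z t) / 2 with hA
      set B : ℂ := (1 - z t) / 2 with hB
      -- the combined vector is killed by bcan
      have hlin : ∀ q, bcan (A • p + B • (flat.symm p.2, flat p.1)) q = 0 := by
        intro q
        have := hp q
        simp only [LinearMap.add_apply, LinearMap.smul_apply, smul_eq_mul] at this
        rw [key] at this
        simp only [map_add, map_smul, LinearMap.add_apply, LinearMap.smul_apply,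
          smul_eq_mul]
        exact this
      have hr : A • p + B • ((flat.symm p.2, flat p.1) : V × Module.Dual ℂ V) = 0 :=
        bcan_nd _ hlin
      -- extract components
      have e1 : A • p.1 + B • flat.symm p.2 = 0 := by
        have := congrArg Prod.fst hr
        simpa using this
      have e2' : A • p.2 + B • flat p.1 = 0 := by
        have := congrArg Prod.snd hr
        simpa using this
      have e2 : A • flat.symm p.2 + B • p.1 = 0 := by
        have := congrArg flat.symm e2'
        simpa [map_add, map_smul] using this
      have hAB : A * A - B * B = z t := by
        rw [hA, hB]; ring
      have hx : p.1 = 0 := by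
        have h : (A * A - B * B) • p.1 = 0 := by
          have : (A * A - B * B) • p.1
              = A • (A • p.1 + B • flat.symm p.2) - B • (A • flat.symm p.2 + B • p.1) := by
            module
          rw [this, e1, e2]; simp
        rw [hAB] at h
        rcases smul_eq_zero.mp h with h' | h'
        · exact absurd h' hzne
        · exact h'
      have hy : flat.symm p.2 = 0 := by
        have h : (A * A - B * B) • flat.symm p.2 = 0 := by
          have : (A * A - B * B) • flat.symm p.2
              = A • (A • flat.symm p.2 + B • p.1) - B • (A • p.1 + B • flat.symm p.2) := by
            module
          rw [this, e1, e2]; simp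
        rw [hAB] at h
        rcases smul_eq_zero.mp h with h' | h'
        · exact absurd h' hzne
        · exact h'
      have hα : p.2 = 0 := by
        have := congrArg flat hy
        simpa using this
      exact Prod.ext hx hα
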